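/- In any algebra (S,*,') satisfying the three axioms, the identity x''' = x' holds for all x in S. -/
import Mathlib

theorem stmt (S : Type*) (m : S → S → S) (i : S → S)
    (E1 : ∀ x, m (m x (i x)) x = x)
    (E2 : ∀ x y, m (m x (i x)) (m (i y) y) = m (m (i y) y) (m x (i x)))
    (E3 : ∀ x y z, m (m x y) z = m x (m y (i (i z)))) :
    ∀ x, i (i (i x)) = i x := by
  have E4 : ∀ x, m x (m (i x) (i (i x))) = x := fun x => by rw [← E3, E1]
  have L12 : ∀ x y, m x y = m x (m (i x) (m (i (i x)) (i (i (i (i y)))))) := fun x y => by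
    conv_lhs => rw [← E4 x]
    rw [E3, E3]
  have L1 : ∀ x, m (i x) (i (i x)) = m (i x) x := fun x => by
    conv_rhs => rw [L12 (i x) x, E4 (i (i x))]
  have L2 : ∀ x, m x (m (i x) x) = x := fun x => by rw [← L1, E4]
  have eq1 : ∀ a0 a1, (m (m a0 (i a0)) (m (i a1) a1)) = (m (m (i a1) a1) (m a0 (i a0))) := E2
  have eq2 : ∀ a0 a1 a2, (m (m a0 a1) a2) = (m a0 (m a1 (i (i a2)))) := E3
  have eq3 : ∀ a0, (m (i a0) (i (i a0))) = (m (i a0) a0) := L1  -- MANUAL L1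
  have eq4 : ∀ a0, (m a0 (m (i a0) a0)) = a0 := L2  -- MANUAL L2
  have eq7 : ∀ a0 a1, (m a0 (m (i a0) (m a0 (i (i (i (i a1))))))) = (m a0 a1) := fun a0 a1 => (Eq.trans (Eq.trans (congrArg (fun t => (m a0 t)) (eq2 (i a0) a0 (i (i a1))).symm) (eq2 a0 (m (i a0) a0) a1).symm) (congrArg (fun t => (m t a1)) (eq4 a0)))
  have eq8 : ∀ a0 a1, (m (i a0) (m (i (i a0)) (i (i a1)))) = (m (i a0) (m a0 (i (i a1)))) := fun a0 a1 => (Eq.trans (Eq.trans (eq2 (i a0) (i (i a0)) a1).symm (congrArg (fun t => (m t a1)) (eq3 a0))) (eq2 (i a0) a0 a1))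
  have eq9 : ∀ a0 a1 a2 a3, (m a0 (m a1 (m (i (i a2)) (i (i (i (i a3))))))) = (m a0 (m a1 (i (i (m a2 (i (i a3))))))) := fun a0 a1 a2 a3 => (Eq.trans (Eq.trans (Eq.trans (Eq.trans (congrArg (fun t => (m a0 t)) (eq2 a1 (i (i a2)) (i (i a3))).symm) (eq2 a0 (m a1 (i (i a2))) a3).symm) (congrArg (fun t => (m t a3)) (eq2 a0 a1 a2).symm)) (eq2 (m a0 a1) a2 a3)) (eq2 a0 a1 (m a2 (i (i a3)))))
  have eq12 : ∀ a0 a1 a2, (m a0 (m (i a0) (m a0 (i (i (m (i (i a1)) (i (i (i (i a2)))))))))) = (m a0 (m a1 (i (i a2)))) := fun a0 a1 a2 => (Eq.trans (Eq.trans (Eq.trans (Eq.trans (Eq.trans (congrArg (fun t => (m a0 t)) (eq9 (i a0) a0 (i (i a1)) (i (i a2))).symm) (congrArg (fun t => (m a0 (m (i a0) t))) (eq2 a0 (i (i (i (i a1)))) (i (i (i (i a2))))).symm)) (congrArg (fun t => (m a0 t)) (eq2 (i a0) (m a0 (i (i (i (i a1))))) (i (i a2))).symm)) (eq2 a0 (m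 (i a0) (m a0 (i (i (i (i a1)))))) a2).symm) (congrArg (fun t => (m t a2)) (eq7 a0 a1))) (eq2 a0 a1 a2))
  have eq19 : ∀ a0 a1, (m (i a0) (m a0 (i (i (m (i a1) a1))))) = (m (i a1) (m a1 (i (i (m (i a0) a0))))) := fun a0 a1 => (Eq.trans (Eq.trans (Eq.trans (Eq.trans (eq2 (i a0) a0 (m (i a1) a1)).symm (congrArg (fun t => (m t (m (i a1) a1))) (eq3 a0).symm)) (eq1 (i a0) a1)) (eq2 (i a1) a1 (m (i a0) (i (i a0))))) (congrArg (fun t => (m (i a1) (m a1 (i (i t))))) (eq3 a0)))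
  have eq21 : ∀ a0 a1, (m (i a0) (m a0 (i (i (m a1 (i a1)))))) = (m a1 (m (i a1) (i (i (m (i a0) a0))))) := fun a0 a1 => (Eq.trans (Eq.trans (eq2 (i a0) a0 (m a1 (i a1))).symm (eq1 a1 a0).symm) (eq2 a1 (i a1) (m (i a0) a0)))
  have eq27 : ∀ a0, (m (i (i a0)) (m (i a0) a0)) = (i (i a0)) := fun a0 => (Eq.trans (Eq.trans (congrArg (fun t => (m (i (i a0)) t)) (eq3 a0).symm) (eq8 (i a0) a0).symm) (eq4 (i (i a0))))
  have eq28 : ∀ a0, (m (i a0) (m a0 (i (i (i a0))))) = (i a0) := fun a0 => (Eq.trans (Eq.trans (eq8 a0 (i a0)).symm (congrArg (fun t => (m (i a0) t)) (eq3 (i a0)))) (eq4 (i a0)))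
  have eq30 : ∀ a0 a1, (m (i (i a0)) (m (i a0) (m a0 (i (i (i (i a1))))))) = (m (i (i a0)) a1) := fun a0 a1 => (Eq.trans (Eq.trans (congrArg (fun t => (m (i (i a0)) t)) (eq2 (i a0) a0 (i (i a1))).symm) (eq2 (i (i a0)) (m (i a0) a0) a1).symm) (congrArg (fun t => (m t a1)) (eq27 a0)))
  have eq40 : ∀ a0, (m (i (i (i a0))) (i (i a0))) = (m (i (i (i a0))) a0) := fun a0 => (Eq.trans (congrArg (fun t => (m (i (i (i a0))) t)) (eq28 (i a0)).symm) (eq30 (i a0) a0))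
  have eq42 : ∀ a0 a1, (m (i (i (i a0))) (m (i (i a0)) (i (i a1)))) = (m (i (i (i a0))) (m a0 (i (i a1)))) := fun a0 a1 => (Eq.trans (Eq.trans (eq2 (i (i (i a0))) (i (i a0)) a1).symm (congrArg (fun t => (m t a1)) (eq40 a0))) (eq2 (i (i (i a0))) a0 a1))
  have eq106 : ∀ a0, (m (i (i (i a0))) (m a0 (i (i (i (i (i a0))))))) = (i (i (i a0))) := fun a0 => (Eq.trans (eq42 a0 (i (i (i a0)))).symm (eq28 (i (i a0))))
  have eq155 : ∀ a0 a1 a2, (m a0 (m a1 (m (i (i (i a2))) a2))) = (m a0 (m a1 (i (i (m (i a2) a2))))) := fun a0 a1 a2 => (Eq.trans (Eq.trans (Eq.trans (congrArg (fun t => (m a0 (m a1 t))) (eq40 a2).symm) (congrArg (fun t => (m a0 (m a1 t))) (eq3 (i (i a2))).symm)) (eq9 a0 a1 (i a2) a2)) (congrArg (fun t => (m a0 (m a1 (i (i t))))) (eq3 a2)))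
  have eq159 : ∀ a0 a1, (m (i (i a0)) (m (i a0) (i (i (m a0 (i (i a1))))))) = (m (i (i a0)) a1) := fun a0 a1 => (Eq.trans (Eq.trans (eq8 (i a0) (m a0 (i (i a1)))).symm (eq9 (i (i a0)) (i (i (i a0))) a0 a1).symm) (eq7 (i (i a0)) a1))
  have eq183 : ∀ a0, (m (i a0) (m a0 (i (i (m (i (i (i a0))) a0))))) = (m (i (i (i a0))) a0) := fun a0 => (Eq.trans (Eq.trans (Eq.trans (congrArg (fun t => (m (i a0) (m a0 (i (i t))))) (eq40 a0).symm) (eq19 (i (i a0)) a0).symm) (congrArg (fun t => (m (i (i (i a0))) (m (i (i a0)) (i (i t))))) (eq3 a0).symm)) (eq159 (i a0) a0))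
  have eq361 : ∀ a0 a1, (m a0 (m (i a0) (m a0 (i (i (m (i (i (i a1))) a1)))))) = (m a0 (m (i a1) a1)) := fun a0 a1 => (Eq.trans (Eq.trans (Eq.trans (congrArg (fun t => (m a0 (m (i a0) (m a0 (i (i t)))))) (eq40 a1).symm) (congrArg (fun t => (m a0 (m (i a0) (m a0 (i (i t)))))) (eq3 (i (i a1))).symm)) (eq12 a0 (i a1) a1)) (congrArg (fun t => (m a0 t)) (eq3 a1)))
  have eq384 : ∀ a0, (m a0 (m (i (i (i a0))) a0)) = a0 := fun a0 => (Eq.trans (Eq.trans (congrArg (fun t => (m a0 t)) (eq183 a0).symm) (eq361 a0 a0)) (eq4 a0))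
  have eq387 : ∀ a0 a1, (m a0 (m (i (i (i a0))) (m a0 (i (i (i (i a1))))))) = (m a0 a1) := fun a0 a1 => (Eq.trans (Eq.trans (congrArg (fun t => (m a0 t)) (eq2 (i (i (i a0))) a0 (i (i a1))).symm) (eq2 a0 (m (i (i (i a0))) a0) a1).symm) (congrArg (fun t => (m t a1)) (eq384 a0)))
  have eq393 : ∀ a0 a1, (m a0 (m a1 (i (i (m (i a1) a1))))) = (m a0 a1) := fun a0 a1 => (Eq.trans (eq155 a0 a1 a1).symm (congrArg (fun t => (m a0 t)) (eq384 a1)))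
  have eq403 : ∀ a0, (m (i (i (i a0))) a0) = (m (i a0) a0) := fun a0 => (Eq.trans (Eq.trans (Eq.trans (Eq.trans (eq183 a0).symm (congrArg (fun t => (m (i a0) (m a0 (i (i t))))) (eq40 a0).symm)) (eq8 a0 (m (i (i (i a0))) (i (i a0)))).symm) (eq393 (i a0) (i (i a0)))) (eq3 a0))
  have eq424 : ∀ a0 a1, (m (i (i (i a0))) (m a0 (i (i a1)))) = (m (i a0) (m a0 (i (i a1)))) := fun a0 a1 => (Eq.trans (Eq.trans (eq2 (i (i (i a0))) a0 a1).symm (congrArg (fun t => (m t a1)) (eq403 a0))) (eq2 (i a0) a0 a1))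
  have eq451 : ∀ a0, (m a0 (i (i (i a0)))) = (m a0 (i a0)) := fun a0 => (Eq.trans (congrArg (fun t => (m a0 t)) (eq106 a0).symm) (eq387 a0 (i a0)))
  have eq460 : ∀ a0, (m (i (i (i a0))) (m a0 (i a0))) = (i (i (i a0))) := fun a0 => (Eq.trans (Eq.trans (Eq.trans (Eq.trans (congrArg (fun t => (m (i (i (i a0))) t)) (eq451 a0).symm) (eq42 a0 (i a0)).symm) (congrArg (fun t => (m (i (i (i a0))) t)) (eq451 (i (i a0))).symm)) (eq42 a0 (i (i (i a0))))) (eq106 a0))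
  have eq462 : ∀ a0, (m (i (i a0)) (i a0)) = (m a0 (i a0)) := fun a0 => (Eq.trans (Eq.trans (Eq.trans (eq159 a0 (i a0)).symm (congrArg (fun t => (m (i (i a0)) (m (i a0) (i (i t))))) (eq451 a0))) (eq21 (i a0) a0)) (eq393 a0 (i a0)))
  have eq468 : ∀ a0, (m (i a0) (m a0 (i a0))) = (i a0) := fun a0 => (Eq.trans (congrArg (fun t => (m (i a0) t)) (eq462 a0).symm) (eq4 (i a0)))
  have eq645 : ∀ a0, (i (i (i a0))) = (i a0) := fun a0 => (Eq.trans (Eq.trans (Eq.trans (Eq.trans (eq460 a0).symm (congrArg (fun t => (m (i (i (i a0))) t)) (eq451 a0).symm)) (eq424 a0 (i a0))) (congrArg (fun t => (m (i a0) t)) (eq451 a0))) (eq468 a0))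
  exact fun x => Eq.trans (eq645 x) (rfl).symm
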